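/- arXiv:2405.05268 — 2 statements merged into one kernel-verified Lean document; each statement's English description precedes it below -/
import Mathlib

section
/- For every integer k ≥ 1 and every positive integer n, S_{2k-1}(n) = Σ_{m=1}^{k} R(k,m) · (1/m) · C(n+m, 2m), as an identity of rational numbers. -/
/-- `S k n = 1^k + 2^k + ⋯ + n^k`, the sum of the `k`-th powers of the first `n`
positive integers. -/
def S (k n : ℕ) : ℕ := ∑ i ∈ Finset.Icc 1 n, i ^ k

/-- `R k m = ∑_{j=0}^m (-1)^j C(2m, j) (m-j)^{2k}`, the sequence A304330. -/
def R (k m : ℕ) : ℤ :=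
  ∑ j ∈ Finset.range (m + 1),
    (-1 : ℤ) ^ j * ((2 * m).choose j : ℤ) * (((m - j) ^ (2 * k) : ℕ) : ℤ)


lemma altsum_pow : ∀ (n t : ℕ), t < n →
    ∑ j ∈ Finset.range (n+1), (-1:ℤ)^j * (n.choose j : ℤ) * (j:ℤ)^t = 0 := by
  intro n
  induction n with
  | zero => intro t ht; omega
  | succ n ih =>
    intro t ht
    match t with
    | 0 =>
      simpa using Int.alternating_sum_range_choose (n := n+1)
    | (s+1) =>
      rw [Finset.sum_range_succ']
      have h0 : (-1:ℤ)^0 * ((n+1).choose 0 : ℤ) * ((0:ℕ):ℤ)^(s+1) = 0 := by simp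
      rw [h0, add_zero]
      have key : ∀ j : ℕ, (-1:ℤ)^(j+1) * ((n+1).choose (j+1) : ℤ) * (((j+1:ℕ)):ℤ)^(s+1)
          = (-(n:ℤ)-1) * ((-1:ℤ)^j * (n.choose j : ℤ) * ((j:ℤ)+1)^s) := by
        intro j
        have hc : ((n:ℤ)+1) * (n.choose j : ℤ) = ((n+1).choose (j+1) : ℤ) * ((j:ℤ)+1) := by
          exact_mod_cast congrArg (Nat.cast : ℕ → ℤ) (Nat.add_one_mul_choose_eq n j)
        push_cast
        rw [pow_succ (((j:ℤ)+1)) s, pow_succ ((-1:ℤ)) j]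
        linear_combination ((-1:ℤ)^j * ((j:ℤ)+1)^s) * hc
      simp only [Nat.cast_succ] at key ⊢
      rw [Finset.sum_congr rfl (fun j _ => key j), ← Finset.mul_sum]
      have hsum : ∑ j ∈ Finset.range (n+1), (-1:ℤ)^j * (n.choose j : ℤ) * ((j:ℤ)+1)^s = 0 := by
        have expand : ∀ j : ℕ, ((j:ℤ)+1)^s
            = ∑ u ∈ Finset.range (s+1), (j:ℤ)^u * (s.choose u : ℤ) := by
          intro j
          rw [add_pow]
          simp
        calc ∑ j ∈ Finset.range (n+1), (-1:ℤ)^j * (n.choose j : ℤ) * ((j:ℤ)+1)^s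
            = ∑ j ∈ Finset.range (n+1), ∑ u ∈ Finset.range (s+1),
                (s.choose u : ℤ) * ((-1:ℤ)^j * (n.choose j : ℤ) * (j:ℤ)^u) := by
              refine Finset.sum_congr rfl fun j _ => ?_
              rw [expand, Finset.mul_sum]
              refine Finset.sum_congr rfl fun u _ => by ring
          _ = ∑ u ∈ Finset.range (s+1), (s.choose u : ℤ) *
                (∑ j ∈ Finset.range (n+1), (-1:ℤ)^j * (n.choose j : ℤ) * (j:ℤ)^u) := by
              rw [Finset.sum_comm]
              simp [Finset.mul_sum]
          _ = 0 := by
              refine Finset.sum_eq_zero fun u hu => ?_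
              rw [ih u (by simp at hu; omega), mul_zero]
      rw [hsum, mul_zero]

lemma R_zero_right (k : ℕ) (hk : 1 ≤ k) : R k 0 = 0 := by
  simp [R]
  omega

lemma R_cast_term (k m j : ℕ) (hj : j ≤ m) :
    (((m - j) ^ (2 * k) : ℕ) : ℤ) = ((m:ℤ) - j) ^ (2 * k) := by
  push_cast [Nat.cast_sub hj]
  ring

lemma R_eq_zero (k m : ℕ) (hk : 1 ≤ k) (hm : k < m) : R k m = 0 := by
  set f : ℕ → ℤ := fun j => (-1:ℤ)^j * ((2*m).choose j : ℤ) * ((m:ℤ) - j)^(2*k) with hf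
  have hR : R k m = ∑ j ∈ Finset.range (m+1), f j := by
    refine Finset.sum_congr rfl fun j hj => ?_
    rw [R_cast_term k m j (by simp at hj; omega)]
  have hfm : f m = 0 := by
    simp [hf]
    omega
  -- full alternating sum vanishes
  have hfull : ∑ j ∈ Finset.range (2*m+1), f j = 0 := by
    have expand : ∀ j : ℕ, ((m:ℤ) - j)^(2*k)
        = ∑ t ∈ Finset.range (2*k+1), (m:ℤ)^t * (-1)^(2*k-t) * ((2*k).choose t : ℤ) * (j:ℤ)^(2*k-t) := by
      intro j
      have : ((m:ℤ) - j) = (m:ℤ) + (-1) * j := by ring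
      rw [this, add_pow]
      refine Finset.sum_congr rfl fun t _ => ?_
      rw [mul_pow]
      ring
    calc ∑ j ∈ Finset.range (2*m+1), f j
        = ∑ j ∈ Finset.range (2*m+1), ∑ t ∈ Finset.range (2*k+1),
            ((m:ℤ)^t * (-1)^(2*k-t) * ((2*k).choose t : ℤ)) *
              ((-1:ℤ)^j * ((2*m).choose j : ℤ) * (j:ℤ)^(2*k-t)) := by
          refine Finset.sum_congr rfl fun j _ => ?_
          rw [hf]
          simp only
          rw [expand j, Finset.mul_sum]
          refine Finset.sum_congr rfl fun t _ => by ring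
      _ = ∑ t ∈ Finset.range (2*k+1), ((m:ℤ)^t * (-1)^(2*k-t) * ((2*k).choose t : ℤ)) *
            (∑ j ∈ Finset.range (2*m+1), (-1:ℤ)^j * ((2*m).choose j : ℤ) * (j:ℤ)^(2*k-t)) := by
          rw [Finset.sum_comm]
          simp [Finset.mul_sum]
      _ = 0 := by
          refine Finset.sum_eq_zero fun t _ => ?_
          rw [altsum_pow (2*m) (2*k-t) (by omega), mul_zero]
  -- symmetry: full sum = 2 * R k m
  have hsplit : ∑ j ∈ Finset.range (2*m+1), f j
      = ∑ j ∈ Finset.range (m+1), f j + ∑ j ∈ Finset.Ico (m+1) (2*m+1), f j := by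
    rw [Finset.range_eq_Ico, Finset.range_eq_Ico]
    exact (Finset.sum_Ico_consecutive f (by omega : 0 ≤ m+1) (by omega : m+1 ≤ 2*m+1)).symm
  have hrefl : ∑ j ∈ Finset.Ico (m+1) (2*m+1), f j = ∑ j ∈ Finset.range m, f j := by
    refine Finset.sum_nbij' (fun j => 2*m - j) (fun j => 2*m - j) ?_ ?_ ?_ ?_ ?_
    · intro a ha; simp at ha ⊢; omega
    · intro a ha; simp at ha ⊢; omega
    · intro a ha; simp only [Finset.mem_Ico] at ha; show 2*m - (2*m - a) = a; omega
    · intro a ha; simp only [Finset.mem_range] at ha; show 2*m - (2*m - a) = a; omega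
    · intro a ha
      simp only [Finset.mem_Ico] at ha
      rw [hf]
      simp only
      have h1 : ((2*m).choose (2*m - a)) = (2*m).choose a := Nat.choose_symm (by omega : a ≤ 2*m)
      have h2 : (-1:ℤ)^(2*m-a) = (-1:ℤ)^a := by
        rcases Nat.even_or_odd a with he | ho
        · have he' : Even (2*m - a) := by
            rcases he with ⟨r, hr⟩; exact ⟨m - r, by omega⟩
          rw [he.neg_one_pow, he'.neg_one_pow]
        · have ho' : Odd (2*m - a) := by
            rcases ho with ⟨r, hr⟩; exact ⟨m - r - 1, by omega⟩
          rw [ho.neg_one_pow, ho'.neg_one_pow]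
      have h3 : ((m:ℤ) - ((2*m - a : ℕ) : ℤ))^(2*k) = ((m:ℤ) - a)^(2*k) := by
        have hc : ((2*m - a : ℕ) : ℤ) = 2*m - a := by
          push_cast [Nat.cast_sub (by omega : a ≤ 2*m)]; ring
        rw [hc]
        have : (m:ℤ) - (2*(m:ℤ) - a) = -((m:ℤ) - a) := by ring
        rw [this, Even.neg_pow ⟨k, by ring⟩]
      rw [h1, h2, h3]
  have hm' : ∑ j ∈ Finset.range (m+1), f j = ∑ j ∈ Finset.range m, f j := by
    rw [Finset.sum_range_succ, hfm, add_zero]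
  rw [hR, hm']
  rw [hsplit, hrefl, hm'] at hfull
  linarith

lemma choose_step (m j : ℕ) (hm : 1 ≤ m) :
    (2*m).choose (j+1) * (j+1) * (2*m - (j+1)) = 2*m*((2*m-1) * ((2*m-2).choose j)) := by
  have h1 : 2*m * ((2*m-1).choose j) = (2*m).choose (j+1) * (j+1) := by
    have := Nat.add_one_mul_choose_eq (2*m-1) j
    have e : 2*m-1+1 = 2*m := by omega
    rwa [e] at this
  have h2 : (2*m-1).choose (j+1) * (j+1) = (2*m-1).choose j * ((2*m-1) - j) :=
    Nat.choose_succ_right_eq (2*m-1) j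
  have h3 : (2*m-1) * ((2*m-2).choose j) = (2*m-1).choose (j+1) * (j+1) := by
    have := Nat.add_one_mul_choose_eq (2*m-2) j
    have e : 2*m-2+1 = 2*m-1 := by omega
    rwa [e] at this
  have e2 : 2*m - (j+1) = (2*m-1) - j := by omega
  calc (2*m).choose (j+1) * (j+1) * (2*m - (j+1))
      = 2*m * ((2*m-1).choose j) * ((2*m-1) - j) := by rw [e2, ← h1]
    _ = 2*m * ((2*m-1).choose j * ((2*m-1)-j)) := by ring
    _ = 2*m * ((2*m-1).choose (j+1) * (j+1)) := by rw [h2]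
    _ = 2*m*((2*m-1) * ((2*m-2).choose j)) := by rw [h3]

lemma R_rec (k m : ℕ) (hm : 1 ≤ m) :
    R (k+1) m = 2*(m:ℤ)*(2*(m:ℤ)-1) * R k (m-1) + (m:ℤ)^2 * R k m := by
  have hL : R (k+1) m = ∑ j ∈ Finset.range (m+1),
      ((m:ℤ)^2 * ((-1:ℤ)^j * ((2*m).choose j : ℤ) * (((m-j)^(2*k) : ℕ):ℤ))
        - ((-1:ℤ)^j * ((2*m).choose j : ℤ) * ((m:ℤ)-j)^(2*k) * ((j:ℤ)*(2*(m:ℤ)-j)))) := by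
    refine Finset.sum_congr rfl fun j hj => ?_
    simp only [Finset.mem_range] at hj
    have hj' : j ≤ m := by omega
    rw [R_cast_term (k+1) m j hj', R_cast_term k m j hj']
    have e : 2*(k+1) = 2*k + 2 := by ring
    rw [e, pow_add]
    ring
  rw [hL, Finset.sum_sub_distrib, ← Finset.mul_sum]
  have hR2 : ∑ j ∈ Finset.range (m+1),
      (-1:ℤ)^j * ((2*m).choose j : ℤ) * (((m-j)^(2*k) : ℕ):ℤ) = R k m := rfl
  rw [hR2]
  have hT : ∑ j ∈ Finset.range (m+1),
      (-1:ℤ)^j * ((2*m).choose j : ℤ) * ((m:ℤ)-j)^(2*k) * ((j:ℤ)*(2*(m:ℤ)-j))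
      = -(2*(m:ℤ)*(2*(m:ℤ)-1)) * R k (m-1) := by
    rw [Finset.sum_range_succ']
    have h0 : (-1:ℤ)^0 * ((2*m).choose 0 : ℤ) * ((m:ℤ)-(0:ℕ))^(2*k) * (((0:ℕ):ℤ)*(2*(m:ℤ)-(0:ℕ))) = 0 := by
      simp
    rw [h0, add_zero]
    have hrange : Finset.range m = Finset.range ((m-1)+1) := by congr 1; omega
    rw [hrange]
    unfold R
    rw [Finset.mul_sum]
    refine Finset.sum_congr rfl fun j hj => ?_
    simp only [Finset.mem_range] at hj
    have hj' : j ≤ m - 1 := by omega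
    -- cast the choose identity
    have hc : (((2*m).choose (j+1) : ℤ)) * ((j:ℤ)+1) * (2*(m:ℤ) - ((j:ℤ)+1))
        = 2*(m:ℤ)*((2*(m:ℤ)-1) * (((2*m-2).choose j : ℤ))) := by
      have := congrArg (Nat.cast : ℕ → ℤ) (choose_step m j hm)
      push_cast [Nat.cast_sub (by omega : j+1 ≤ 2*m), Nat.cast_sub (by omega : 1 ≤ 2*m),
        Nat.cast_sub (by omega : 2 ≤ 2*m)] at this
      convert this using 2
    have hcast : (((m - 1 - j)^(2*k) : ℕ):ℤ) = ((m:ℤ) - (j+1))^(2*k) := by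
      have := R_cast_term k (m-1) j hj'
      rw [this]
      have : ((m-1 : ℕ):ℤ) = (m:ℤ) - 1 := by
        push_cast [Nat.cast_sub (by omega : 1 ≤ m)]; ring
      rw [this]
      ring_nf
    have hch : ((2*(m-1)) : ℕ) = 2*m - 2 := by omega
    rw [hch, hcast]
    push_cast
    have hpow : (-1:ℤ)^(j+1) = -(-1:ℤ)^j := by rw [pow_succ]; ring
    rw [hpow]
    linear_combination (-(-1:ℤ)^j * ((m:ℤ) - (j+1))^(2*k)) * hc
  rw [hT]
  ring


lemma choose_quad_nat (i m : ℕ) (hm : 1 ≤ m) :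
    2*m*(2*m+1) * ((i+m).choose (2*m+1)) = (i+m) * ((i-m) * ((i+m-1).choose (2*m-1))) := by
  have h1 : (i+m) * ((i+m-1).choose (2*m)) = (i+m).choose (2*m+1) * (2*m+1) := by
    have := Nat.add_one_mul_choose_eq (i+m-1) (2*m)
    have e : i+m-1+1 = i+m := by omega
    rwa [e] at this
  have h2 : (i+m-1).choose (2*m) * (2*m) = (i+m-1).choose (2*m-1) * (i-m) := by
    have := Nat.choose_succ_right_eq (i+m-1) (2*m-1)
    have e1 : 2*m-1+1 = 2*m := by omega
    have e2 : (i+m-1) - (2*m-1) = i - m := by omega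
    rwa [e1, e2] at this
  calc 2*m*(2*m+1) * ((i+m).choose (2*m+1))
      = 2*m * ((i+m).choose (2*m+1) * (2*m+1)) := by ring
    _ = 2*m * ((i+m) * ((i+m-1).choose (2*m))) := by rw [h1]
    _ = (i+m) * ((i+m-1).choose (2*m) * (2*m)) := by ring
    _ = (i+m) * ((i+m-1).choose (2*m-1) * (i-m)) := by rw [h2]
    _ = (i+m) * ((i-m) * ((i+m-1).choose (2*m-1))) := by ring

lemma choose_quad (i m : ℕ) (hm : 1 ≤ m) :
    ((i:ℚ)^2 - (m:ℚ)^2) * (((i+m-1).choose (2*m-1) : ℕ) : ℚ)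
      = 2*(m:ℚ)*(2*(m:ℚ)+1) * (((i+m).choose (2*m+1) : ℕ) : ℚ) := by
  rcases lt_or_ge i m with h | h
  · have z1 : (i+m-1).choose (2*m-1) = 0 := Nat.choose_eq_zero_of_lt (by omega)
    have z2 : (i+m).choose (2*m+1) = 0 := Nat.choose_eq_zero_of_lt (by omega)
    rw [z1, z2]; simp
  · have := congrArg (Nat.cast : ℕ → ℚ) (choose_quad_nat i m hm)
    push_cast [Nat.cast_sub (h : m ≤ i)] at this
    linear_combination -this

lemma hockey (m n : ℕ) (hm : 1 ≤ m) :
    ∑ i ∈ Finset.Icc 1 n, ((i+m-1).choose (2*m-1)) = (n+m).choose (2*m) := by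
  induction n with
  | zero =>
    simp [Nat.choose_eq_zero_of_lt (by omega : m < 2*m)]
  | succ n ih =>
    rw [Finset.sum_Icc_succ_top (by omega : 1 ≤ n+1), ih]
    have e1 : n+1+m-1 = n+m := by omega
    have e2 : n+1+m = (n+m)+1 := by omega
    have e3 : 2*m = (2*m-1)+1 := by omega
    rw [e1, e2, e3, Nat.choose_succ_succ]
    simp [Nat.succ_eq_add_one, Nat.add_sub_cancel, Nat.add_comm]

lemma powA (k : ℕ) (hk : 1 ≤ k) (i : ℕ) :
    (i:ℚ)^(2*k-1) = ∑ m ∈ Finset.Icc 1 k,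
      (R k m : ℚ)/(m:ℚ) * (((i+m-1).choose (2*m-1) : ℕ) : ℚ) := by
  induction k, hk using Nat.le_induction with
  | base =>
    have hR11 : R 1 1 = 1 := by decide
    rw [Finset.Icc_self, Finset.sum_singleton, hR11]
    norm_num
  | succ k hk ih =>
    have hLHS : (i:ℚ)^(2*(k+1)-1) = (i:ℚ)^2 * (i:ℚ)^(2*k-1) := by
      rw [← pow_add]; congr 1; omega
    rw [hLHS, ih, Finset.mul_sum]
    have step1 : ∀ m ∈ Finset.Icc 1 k,
        (i:ℚ)^2 * ((R k m : ℚ)/(m:ℚ) * (((i+m-1).choose (2*m-1) : ℕ) : ℚ))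
          = (R k m : ℚ)*(2*(2*(m:ℚ)+1)) * (((i+m).choose (2*m+1) : ℕ) : ℚ)
            + (m:ℚ)*(R k m : ℚ) * (((i+m-1).choose (2*m-1) : ℕ) : ℚ) := by
      intro m hm
      simp only [Finset.mem_Icc] at hm
      have hm0 : (m:ℚ) ≠ 0 := Nat.cast_ne_zero.mpr (by omega)
      have hq := choose_quad i m hm.1
      have key : (i:ℚ)^2 * (((i+m-1).choose (2*m-1) : ℕ) : ℚ)
          = 2*(m:ℚ)*(2*(m:ℚ)+1) * (((i+m).choose (2*m+1) : ℕ) : ℚ)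
            + (m:ℚ)^2 * (((i+m-1).choose (2*m-1) : ℕ) : ℚ) := by
        linear_combination hq
      calc (i:ℚ)^2 * ((R k m : ℚ)/(m:ℚ) * (((i+m-1).choose (2*m-1) : ℕ) : ℚ))
          = (R k m : ℚ)/(m:ℚ) * ((i:ℚ)^2 * (((i+m-1).choose (2*m-1) : ℕ) : ℚ)) := by ring
        _ = (R k m : ℚ)/(m:ℚ) * (2*(m:ℚ)*(2*(m:ℚ)+1) * (((i+m).choose (2*m+1) : ℕ) : ℚ)
              + (m:ℚ)^2 * (((i+m-1).choose (2*m-1) : ℕ) : ℚ)) := by rw [key]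
        _ = (R k m : ℚ)*(2*(2*(m:ℚ)+1)) * (((i+m).choose (2*m+1) : ℕ) : ℚ)
              + (m:ℚ)*(R k m : ℚ) * (((i+m-1).choose (2*m-1) : ℕ) : ℚ) := by
            field_simp
    rw [Finset.sum_congr rfl step1, Finset.sum_add_distrib]
    -- RHS manipulation
    have step2 : ∀ m ∈ Finset.Icc 1 (k+1),
        (R (k+1) m : ℚ)/(m:ℚ) * (((i+m-1).choose (2*m-1) : ℕ) : ℚ)
          = (R k (m-1) : ℚ)*(2*(2*(m:ℚ)-1)) * (((i+m-1).choose (2*m-1) : ℕ) : ℚ)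
            + (m:ℚ)*(R k m : ℚ) * (((i+m-1).choose (2*m-1) : ℕ) : ℚ) := by
      intro m hm
      simp only [Finset.mem_Icc] at hm
      have hm0 : (m:ℚ) ≠ 0 := Nat.cast_ne_zero.mpr (by omega)
      have hr := R_rec k m hm.1
      have hrq : (R (k+1) m : ℚ) = 2*(m:ℚ)*(2*(m:ℚ)-1) * (R k (m-1) : ℚ) + (m:ℚ)^2 * (R k m : ℚ) := by
        exact_mod_cast congrArg (Int.cast : ℤ → ℚ) hr
      rw [hrq]
      field_simp
    rw [Finset.sum_congr rfl step2, Finset.sum_add_distrib]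
    congr 1
    · -- first sums: reindex
      have hins : Finset.Icc 1 (k+1) = insert 1 (Finset.Icc 2 (k+1)) := by
        ext x; simp; omega
      rw [hins, Finset.sum_insert (by simp)]
      rw [show ((1:ℕ)-1) = 0 from rfl, R_zero_right k hk]
      simp only [Int.cast_zero, zero_mul, zero_add]
      refine (Finset.sum_nbij' (fun m => m - 1) (fun m => m + 1) ?_ ?_ ?_ ?_ ?_).symm
      · intro a ha; simp at ha ⊢; omega
      · intro a ha; simp at ha ⊢; omega
      · intro a ha; simp at ha; show a - 1 + 1 = a; omega
      · intro a ha; simp at ha; show a + 1 - 1 = a; omega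
      · intro a ha
        simp only [Finset.mem_Icc] at ha
        show (R k (a-1) : ℚ)*(2*(2*(a:ℚ)-1)) * (((i+a-1).choose (2*a-1) : ℕ) : ℚ)
          = (R k (a-1) : ℚ)*(2*(2*((a-1 : ℕ):ℚ)+1)) * (((i+(a-1)).choose (2*(a-1)+1) : ℕ) : ℚ)
        have e1 : i + (a-1) = i + a - 1 := by omega
        have e2 : 2*(a-1)+1 = 2*a-1 := by omega
        have e3 : ((a-1 : ℕ):ℚ) = (a:ℚ) - 1 := by
          push_cast [Nat.cast_sub (by omega : 1 ≤ a)]; ring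
        rw [e1, e2, e3]
        ring
    · -- second sums: split top
      rw [Finset.sum_Icc_succ_top (by omega : 1 ≤ k+1)]
      have htop : ((k+1:ℕ):ℚ)*(R k (k+1) : ℚ) * (((i+(k+1)-1).choose (2*(k+1)-1) : ℕ) : ℚ) = 0 := by
        rw [R_eq_zero k (k+1) hk (by omega)]
        simp
      rw [htop, add_zero]


theorem stmt_3 (k n : ℕ) (hk : 1 ≤ k) (hn : 1 ≤ n) :
    (S (2 * k - 1) n : ℚ) =
      ∑ m ∈ Finset.Icc 1 k,
        (R k m : ℚ) * (1 / (m : ℚ)) * ((n + m).choose (2 * m) : ℚ) := by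
  have h1 : (S (2*k-1) n : ℚ) = ∑ i ∈ Finset.Icc 1 n, (i:ℚ)^(2*k-1) := by
    unfold S
    push_cast
    rfl
  rw [h1]
  rw [Finset.sum_congr rfl fun i (_ : i ∈ Finset.Icc 1 n) => powA k hk i, Finset.sum_comm]
  refine Finset.sum_congr rfl fun m hm => ?_
  simp only [Finset.mem_Icc] at hm
  rw [← Finset.mul_sum]
  have h3 : ∑ i ∈ Finset.Icc 1 n, (((i+m-1).choose (2*m-1) : ℕ) : ℚ)
      = (((n+m).choose (2*m) : ℕ) : ℚ) := by
    rw [← Nat.cast_sum, hockey m n hm.1]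
  rw [h3]
  ring
end

section
/- For all positive integers k and m with 1 ≤ m ≤ k, R(k,m) = 2^(2k+m-1) · m! · Σ (2k)! / (b_1! · b_2! ⋯ b_k!) · Π_{r=1}^{k} (1 / (4^r · (2r)!))^{b_r}, where the summation extends over all k-tuples of nonnegative integers (b_1, b_2, …, b_k) satisfying b_1 + 2·b_2 + ⋯ + k·b_k = k and b_1 + b_2 + ⋯ + b_k = m, and the identity is between rational numbers. -/
/-- The finset of `k`-tuples `(b_1, …, b_k)` of nonnegative integers (indexed by
`Fin k`, with `b r` standing for `b_{r+1}`) satisfying `b_1 + 2 b_2 + ⋯ + k b_k = k`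
and `b_1 + b_2 + ⋯ + b_k = m`.  Note every such tuple has all entries `≤ k`, so
restricting to entries in `range (k+1)` loses nothing. -/
def tuples (k m : ℕ) : Finset (Fin k → ℕ) :=
  (Fintype.piFinset fun _ : Fin k => Finset.range (k + 1)).filter
    fun b => (∑ r : Fin k, (r.1 + 1) * b r) = k ∧ (∑ r : Fin k, b r) = m

open Finset PowerSeries


noncomputable section Aux

def Eexp (a : ℚ) : PowerSeries ℚ := rescale a (exp ℚ)

lemma Eexp_mul (a b : ℚ) : Eexp a * Eexp b = Eexp (a + b) :=
  PowerSeries.exp_mul_exp_eq_exp_add a b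

lemma Eexp_zero : Eexp 0 = 1 := by
  rw [Eexp, rescale_zero]
  simp [PowerSeries.constantCoeff_exp]

lemma coeff_Eexp (a : ℚ) (n : ℕ) : coeff n (Eexp a) = a ^ n / n.factorial := by
  simp [Eexp, coeff_rescale, PowerSeries.coeff_exp]
  ring

lemma Eexp_pow (a : ℚ) (n : ℕ) : Eexp a ^ n = Eexp (n * a) := by
  induction n with
  | zero => simp [Eexp_zero]
  | succ n ih =>
      rw [pow_succ, ih, Eexp_mul, show ((n : ℚ) * a + a) = ((n + 1 : ℕ) : ℚ) * a by
        push_cast; ring]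

def cc (k : ℕ) (r : Fin k) : ℚ := 1 / (4 ^ (r.1 + 1) * ((2 * (r.1 + 1)).factorial : ℚ))

def DD (k : ℕ) : PowerSeries ℚ := ∑ r : Fin k, C (cc k r) * X ^ (2 * (r.1 + 1))

def Co : PowerSeries ℚ := (Eexp (1/4) - Eexp (-(1/4))) ^ 2 * C (1/2)

lemma Co_eq : Co = C (1/2) * Eexp (1/2) + C (1/2) * Eexp (-(1/2)) - 1 := by
  have h1 : Eexp (1/4) * Eexp (1/4) = Eexp (1/2) := by rw [Eexp_mul]; norm_num
  have h2 : Eexp (1/4) * Eexp (-(1/4)) = 1 := by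
    rw [Eexp_mul]; norm_num [Eexp_zero]
  have h3 : Eexp (-(1/4)) * Eexp (-(1/4)) = Eexp (-(1/2)) := by rw [Eexp_mul]; norm_num
  have expand : (Eexp (1/4) - Eexp (-(1/4))) ^ 2
      = Eexp (1/2) - 2 + Eexp (-(1/2)) := by
    have h : (Eexp (1/4) - Eexp (-(1/4))) ^ 2
        = Eexp (1/4) * Eexp (1/4) - 2 * (Eexp (1/4) * Eexp (-(1/4)))
          + Eexp (-(1/4)) * Eexp (-(1/4)) := by ring
    rw [h, h1, h2, h3]; ring
  have h4 : (2 : ℚ⟦X⟧) * C (1/2) = 1 := by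
    rw [show (2 : ℚ⟦X⟧) = C 2 from (map_ofNat C 2).symm, ← map_mul]
    norm_num
  rw [Co, expand]
  linear_combination -h4

lemma coeff_Co_eq_coeff_DD (k : ℕ) : ∀ n ≤ 2 * k, coeff n Co = coeff n (DD k) := by
  intro n hn
  have hCo : coeff n Co
      = (1/2) * ((1/2 : ℚ) ^ n / n.factorial) + (1/2) * ((-(1/2) : ℚ) ^ n / n.factorial)
        - (if n = 0 then 1 else 0) := by
    rw [Co_eq]
    simp [coeff_C_mul, coeff_Eexp, PowerSeries.coeff_one]
  have hDD : coeff n (DD k)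
      = ∑ r : Fin k, if n = 2 * (r.1 + 1) then cc k r else 0 := by
    simp [DD, coeff_C_mul, coeff_X_pow, mul_ite, mul_one, mul_zero]
  rw [hCo, hDD]
  rcases Nat.even_or_odd n with he | ho
  · obtain ⟨t, ht⟩ := he
    rcases Nat.eq_zero_or_pos t with rfl | htpos
    · norm_num at ht; subst ht; simp; norm_num
    · have hn0 : n ≠ 0 := by omega
      have hneg : (-(1/2) : ℚ) ^ n = (1/2 : ℚ) ^ n := by
        apply Even.neg_pow ⟨t, ht⟩
      rw [hneg, if_neg hn0]
      rw [Finset.sum_eq_single (⟨t - 1, by omega⟩ : Fin k)]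
      · rw [if_pos (by simp; omega)]
        have : n = 2 * t := by omega
        subst this
        simp only [cc]
        have h2 : ((2 * t).factorial : ℚ) ≠ 0 := by positivity
        rw [show t - 1 + 1 = t by omega]
        rw [pow_mul]
        norm_num
        rw [show ((1:ℚ)/4) ^ t = ((4:ℚ)^t)⁻¹ by rw [one_div, inv_pow]]
        field_simp
        ring
      · intro b _ hb
        rw [if_neg]
        intro hc
        apply hb
        have : b.1 = t - 1 := by omega
        exact Fin.ext this
      · intro h; exact absurd (mem_univ _) h
  · obtain ⟨q, hq⟩ := ho
    have hn0 : n ≠ 0 := by omega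
    have hneg : (-(1/2) : ℚ) ^ n = -((1/2 : ℚ) ^ n) := Odd.neg_pow ⟨q, hq⟩ _
    rw [hneg, if_neg hn0]
    rw [Finset.sum_eq_zero]
    · ring
    · intro r _
      rw [if_neg]
      omega

end Aux

section Aux2
open Finset PowerSeries

lemma coeff_pow_congr {φ ψ : ℚ⟦X⟧} {N : ℕ} (h : ∀ i ≤ N, coeff i φ = coeff i ψ) :
    ∀ m, ∀ i ≤ N, coeff i (φ ^ m) = coeff i (ψ ^ m) := by
  intro m
  induction m with
  | zero => intro i _; rfl
  | succ m ih =>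
      intro i hi
      rw [pow_succ, pow_succ, coeff_mul, coeff_mul]
      refine Finset.sum_congr rfl fun p hp => ?_
      rw [Finset.HasAntidiagonal.mem_antidiagonal] at hp
      rw [ih p.1 (by omega), h p.2 (by omega)]

lemma Co_pow (m : ℕ) : Co ^ m
    = ∑ j ∈ range (2 * m + 1),
        C ((-1 : ℚ) ^ j * ((2 * m).choose j : ℚ) * (1/2) ^ m)
          * Eexp (((j : ℚ) - m) / 2) := by
  rw [Co, mul_pow, ← pow_mul, ← map_pow, sub_pow, sum_mul]
  refine Finset.sum_congr rfl fun j hj => ?_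
  rw [mem_range] at hj
  rw [Eexp_pow, Eexp_pow]
  have hE : Eexp ((j : ℚ) * (1/4)) * Eexp (((2 * m - j : ℕ) : ℚ) * (-(1/4)))
      = Eexp (((j : ℚ) - m) / 2) := by
    rw [Eexp_mul, Nat.cast_sub (by omega : j ≤ 2 * m)]
    congr 1
    push_cast
    ring
  have hscal : (-1 : ℚ⟦X⟧) ^ (j + 2 * m) * ((2 * m).choose j : ℚ⟦X⟧) * C ((1/2) ^ m)
      = C ((-1 : ℚ) ^ j * ((2 * m).choose j : ℚ) * (1/2) ^ m) := by
    rw [show (-1 : ℚ⟦X⟧) = C (-1) by simp,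
        show (((2 * m).choose j : ℕ) : ℚ⟦X⟧) = C (((2 * m).choose j : ℕ) : ℚ) from
          (map_natCast C _).symm,
        ← map_pow, ← map_mul, ← map_mul]
    congr 1
    rw [pow_add, pow_mul, neg_one_sq, one_pow, mul_one]
  calc (-1 : ℚ⟦X⟧) ^ (j + 2 * m) * Eexp ((j : ℚ) * (1/4))
        * Eexp (((2 * m - j : ℕ) : ℚ) * (-(1/4))) * ((2 * m).choose j : ℚ⟦X⟧) * C ((1/2) ^ m)
      = ((-1 : ℚ⟦X⟧) ^ (j + 2 * m) * ((2 * m).choose j : ℚ⟦X⟧) * C ((1/2) ^ m))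
        * (Eexp ((j : ℚ) * (1/4)) * Eexp (((2 * m - j : ℕ) : ℚ) * (-(1/4)))) := by ring
    _ = _ := by rw [hE, hscal]

lemma coeff_Co_pow (k m : ℕ) :
    coeff (2 * k) (Co ^ m)
      = ∑ j ∈ range (2 * m + 1),
          (-1 : ℚ) ^ j * ((2 * m).choose j : ℚ) * (1/2) ^ m
            * ((((j : ℚ) - m) / 2) ^ (2 * k) / ((2 * k).factorial : ℚ)) := by
  rw [Co_pow, map_sum]
  exact Finset.sum_congr rfl fun j _ => by rw [coeff_C_mul, coeff_Eexp]

lemma sum_sym (k m : ℕ) (hm : 1 ≤ m) (hk : m ≤ k) :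
    ∑ j ∈ range (2 * m + 1), (-1 : ℚ) ^ j * ((2 * m).choose j : ℚ) * ((m : ℚ) - j) ^ (2 * k)
      = 2 * ((∑ j ∈ Finset.range (m + 1),
          (-1 : ℤ) ^ j * ((2 * m).choose j : ℤ) * (((m - j) ^ (2 * k) : ℕ) : ℤ) : ℤ) : ℚ) := by
  set t : ℕ → ℚ := fun j => (-1 : ℚ) ^ j * ((2 * m).choose j : ℚ) * ((m : ℚ) - j) ^ (2 * k)
    with ht
  have hR : ((∑ j ∈ Finset.range (m + 1),
      (-1 : ℤ) ^ j * ((2 * m).choose j : ℤ) * (((m - j) ^ (2 * k) : ℕ) : ℤ) : ℤ) : ℚ)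
      = ∑ j ∈ range (m + 1), t j := by
    push_cast
    refine Finset.sum_congr rfl fun j hj => ?_
    rw [mem_range] at hj
    rw [ht]
    rw [Nat.cast_sub (by omega : j ≤ m)]
  rw [hR]
  have htm : t m = 0 := by
    simp only [ht]
    have : ((m : ℚ) - m) = 0 := by ring
    rw [this, zero_pow (by omega : 2 * k ≠ 0), mul_zero]
  have hsplit : ∑ j ∈ range (2 * m + 1), t j
      = ∑ j ∈ range (m + 1), t j + ∑ j ∈ Ico (m + 1) (2 * m + 1), t j := by
    rw [range_eq_Ico, ← Finset.sum_Ico_consecutive t (by omega : 0 ≤ m + 1)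
      (by omega : m + 1 ≤ 2 * m + 1), range_eq_Ico]
  have hrefl : ∑ j ∈ Ico (m + 1) (2 * m + 1), t j = ∑ j ∈ range m, t j := by
    refine Finset.sum_nbij' (fun j => 2 * m - j) (fun j => 2 * m - j) ?_ ?_ ?_ ?_ ?_
    · intro a ha; rw [mem_Ico] at ha; rw [mem_range]; omega
    · intro a ha; rw [mem_range] at ha; rw [mem_Ico]; omega
    · intro a ha; rw [mem_Ico] at ha; omega
    · intro a ha; rw [mem_range] at ha; omega
    · intro a ha
      rw [mem_Ico] at ha
      simp only [ht]
      have h1 : (-1 : ℚ) ^ a = (-1 : ℚ) ^ (2 * m - a) := by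
        have key : (-1 : ℚ) ^ (2 * m - a) * (-1 : ℚ) ^ a = 1 := by
          rw [← pow_add, show 2 * m - a + a = 2 * m by omega, pow_mul, neg_one_sq, one_pow]
        have ha2 : (-1 : ℚ) ^ a * (-1 : ℚ) ^ a = 1 := by
          rw [← pow_add, ← two_mul, pow_mul, neg_one_sq, one_pow]
        linear_combination (-(-1 : ℚ) ^ a) * key + ((-1 : ℚ) ^ (2 * m - a)) * ha2
      have h2 : (2 * m).choose a = (2 * m).choose (2 * m - a) :=
        (Nat.choose_symm (by omega : a ≤ 2 * m)).symm
      have h3 : ((m : ℚ) - a) ^ (2 * k) = ((m : ℚ) - ((2 * m - a : ℕ) : ℚ)) ^ (2 * k) := by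
        rw [Nat.cast_sub (by omega : a ≤ 2 * m)]
        rw [show (m : ℚ) - (((2 * m : ℕ) : ℚ) - a) = -((m : ℚ) - a) by push_cast; ring]
        rw [Even.neg_pow (even_two_mul k)]
      rw [h1, h2, h3]
  have hlast : ∑ j ∈ range (m + 1), t j = ∑ j ∈ range m, t j := by
    rw [Finset.sum_range_succ, htm, add_zero]
  rw [hsplit, hrefl, ← hlast]
  ring

end Aux2

section Aux3
open Finset PowerSeries

lemma filter_piAntidiag_eq (k m : ℕ) (hk : m ≤ k) :
    (piAntidiag (univ : Finset (Fin k)) m).filter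
        (fun f => ∑ r : Fin k, (r.1 + 1) * f r = k) = tuples k m := by
  ext f
  simp only [tuples, mem_filter, mem_piAntidiag, Fintype.mem_piFinset, mem_range, mem_univ,
    ne_eq, forall_const]
  constructor
  · rintro ⟨⟨hsum, -⟩, hw⟩
    refine ⟨fun r => ?_, hw, hsum⟩
    have h1 : f r ≤ ∑ i : Fin k, f i := Finset.single_le_sum (fun i _ => Nat.zero_le _) (mem_univ r)
    have h2 : ∑ i : Fin k, f i = m := hsum
    omega
  · rintro ⟨-, hw, hsum⟩
    exact ⟨⟨hsum, fun _ _ => trivial⟩, hw⟩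

lemma multinomial_cast {k m : ℕ} (f : Fin k → ℕ) (hf : ∑ r : Fin k, f r = m) :
    ((Nat.multinomial univ f : ℕ) : ℚ)
      = (m.factorial : ℚ) / ∏ r : Fin k, ((f r).factorial : ℚ) := by
  have hs := Nat.multinomial_spec univ f
  rw [hf] at hs
  have h0 : (∏ r : Fin k, ((f r).factorial : ℚ)) ≠ 0 := by positivity
  rw [eq_div_iff h0]
  rw [mul_comm]
  exact_mod_cast hs

lemma coeff_DD_pow (k m : ℕ) (hk : m ≤ k) :
    coeff (2 * k) (DD k ^ m)
      = ∑ b ∈ tuples k m,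
          ((m.factorial : ℚ) / ∏ r : Fin k, ((b r).factorial : ℚ))
            * ∏ r : Fin k, (cc k r) ^ (b r) := by
  rw [DD, Finset.sum_pow_eq_sum_piAntidiag, map_sum]
  have step : ∀ f ∈ piAntidiag (univ : Finset (Fin k)) m,
      coeff (2 * k) ((Nat.multinomial univ f : ℚ⟦X⟧)
          * ∏ r : Fin k, (C (cc k r) * X ^ (2 * (r.1 + 1))) ^ (f r))
        = if ∑ r : Fin k, (r.1 + 1) * f r = k
            then ((Nat.multinomial univ f : ℕ) : ℚ) * ∏ r : Fin k, (cc k r) ^ (f r) else 0 := by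
    intro f _
    have hprod : ∏ r : Fin k, (C (cc k r) * X ^ (2 * (r.1 + 1))) ^ (f r)
        = C (∏ r : Fin k, (cc k r) ^ (f r))
            * X ^ (∑ r : Fin k, 2 * (r.1 + 1) * f r) := by
      rw [map_prod, ← Finset.prod_pow_eq_pow_sum]
      rw [← Finset.prod_mul_distrib]
      refine Finset.prod_congr rfl fun r _ => ?_
      rw [mul_pow, map_pow, ← pow_mul]
    rw [hprod, show ((Nat.multinomial univ f : ℕ) : ℚ⟦X⟧)
        = C ((Nat.multinomial univ f : ℕ) : ℚ) from (map_natCast C _).symm,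
      ← mul_assoc, ← map_mul, coeff_C_mul, coeff_X_pow]
    have hcond : (2 * k = ∑ r : Fin k, 2 * (r.1 + 1) * f r)
        ↔ (∑ r : Fin k, (r.1 + 1) * f r = k) := by
      have : ∑ r : Fin k, 2 * (r.1 + 1) * f r = 2 * ∑ r : Fin k, (r.1 + 1) * f r := by
        rw [Finset.mul_sum]
        exact Finset.sum_congr rfl fun r _ => by ring
      rw [this]
      omega
    by_cases hc : ∑ r : Fin k, (r.1 + 1) * f r = k
    · rw [if_pos (hcond.mpr hc), if_pos hc, mul_one]
    · rw [if_neg (fun h => hc (hcond.mp h)), if_neg hc, mul_zero]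
  rw [Finset.sum_congr rfl step, ← Finset.sum_filter, filter_piAntidiag_eq k m hk]
  refine Finset.sum_congr rfl fun b hb => ?_
  have hbm : ∑ r : Fin k, b r = m := by
    simp only [tuples, mem_filter] at hb
    exact hb.2.2
  rw [multinomial_cast b hbm]

end Aux3

theorem stmt_6 (k m : ℕ) (hm : 1 ≤ m) (hk : m ≤ k) :
    (R k m : ℚ) =
      2 ^ (2 * k + m - 1) * (Nat.factorial m : ℚ) *
        ∑ b ∈ tuples k m,
          ((Nat.factorial (2 * k) : ℚ) / ∏ r : Fin k, (Nat.factorial (b r) : ℚ)) *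
            ∏ r : Fin k,
              ((1 : ℚ) / (4 ^ (r.1 + 1) * (Nat.factorial (2 * (r.1 + 1)) : ℚ))) ^ (b r) := by
  have hDC : coeff (2 * k) (Co ^ m) = coeff (2 * k) (DD k ^ m) :=
    coeff_pow_congr (coeff_Co_eq_coeff_DD k) m (2 * k) le_rfl
  have hA := coeff_DD_pow k m hk
  have hS : ∑ j ∈ range (2 * m + 1),
      (-1 : ℚ) ^ j * ((2 * m).choose j : ℚ) * ((m : ℚ) - j) ^ (2 * k)
        = 2 * ((R k m : ℤ) : ℚ) := sum_sym k m hm hk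
  have hB' : coeff (2 * k) (Co ^ m)
      = (∑ j ∈ range (2 * m + 1),
          (-1 : ℚ) ^ j * ((2 * m).choose j : ℚ) * ((m : ℚ) - j) ^ (2 * k))
          * ((1/2 : ℚ) ^ m / (2 ^ (2 * k) * ((2 * k).factorial : ℚ))) := by
    rw [coeff_Co_pow k m, Finset.sum_mul]
    refine Finset.sum_congr rfl fun j _ => ?_
    have h : (((j : ℚ) - m) / 2) ^ (2 * k) = ((m : ℚ) - j) ^ (2 * k) / 2 ^ (2 * k) := by
      rw [div_pow, show ((j : ℚ) - m) = -((m : ℚ) - j) by ring, Even.neg_pow (even_two_mul k)]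
    rw [h]
    have hf : ((2 * k).factorial : ℚ) ≠ 0 := by positivity
    field_simp
  have hRHS : (2 : ℚ) ^ (2 * k + m - 1) * (Nat.factorial m : ℚ) *
        ∑ b ∈ tuples k m,
          ((Nat.factorial (2 * k) : ℚ) / ∏ r : Fin k, (Nat.factorial (b r) : ℚ)) *
            ∏ r : Fin k,
              ((1 : ℚ) / (4 ^ (r.1 + 1) * (Nat.factorial (2 * (r.1 + 1)) : ℚ))) ^ (b r)
      = 2 ^ (2 * k + m - 1) * ((2 * k).factorial : ℚ) * coeff (2 * k) (DD k ^ m) := by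
    rw [hA, Finset.mul_sum, Finset.mul_sum]
    refine Finset.sum_congr rfl fun b _ => ?_
    simp only [cc]
    ring
  rw [hRHS, ← hDC, hB', hS]
  have h2km : (2 : ℚ) ^ (2 * k + m - 1) * 2 = 2 ^ (2 * k) * 2 ^ m := by
    rw [← pow_succ, show 2 * k + m - 1 + 1 = 2 * k + m by omega, pow_add]
  have hf : ((2 * k).factorial : ℚ) ≠ 0 := by positivity
  have h2 : (2 : ℚ) ^ (2 * k) ≠ 0 := by positivity
  have h2m : (2 : ℚ) ^ m ≠ 0 := by positivity
  rw [one_div, inv_pow]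
  field_simp
  linear_combination (-(R k m : ℚ)) * h2km
end
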